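/- Fix a real b > 1. There exists a constant C > 0 (depending only on b) such that for every a ∈ (0, 1], every E ≥ 1, and every x ∈ [−E, E], the NBP marginal density with σ² = 1 satisfies g_{a,b}(x) ≥ C · a · E^{−(2b+1)}. -/

import Mathlib

open Real MeasureTheory

/-- The (standardized, σ² = 1) NBP marginal density, as an extended-real-valued
integral (so that the pole at `x = 0` when `a ≤ 1/2` is the value `∞`). -/
noncomputable def nbpMarginal (a b : ℝ) (x : ℝ) : ENNReal :=
  ∫⁻ t in Set.Ioi (0 : ℝ),
    ENNReal.ofReal ((Real.Gamma (a + b) / (Real.Gamma a * Real.Gamma b)) *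
      ((2 * π * t) ^ (-(1 / 2 : ℝ)) * Real.exp (-x ^ 2 / (2 * t)) *
        t ^ (a - 1) * (1 + t) ^ (-(a + b))))

/-- `Γ(s) ≥ e⁻²` for `s ≥ 1`. -/
lemma aux_gamma_ge {s : ℝ} (hs : 1 ≤ s) : Real.exp (-2) ≤ Real.Gamma s := by
  have hs0 : (0:ℝ) < s := by linarith
  rw [Real.Gamma_eq_integral hs0]
  have hint : IntegrableOn (fun x : ℝ => Real.exp (-x) * x ^ (s - 1)) (Set.Ioi 0) :=
    Real.GammaIntegral_convergent hs0
  have hsub : Set.Ioc (1:ℝ) 2 ⊆ Set.Ioi 0 := fun x hx => lt_trans one_pos hx.1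
  have key : Real.exp (-2) * ((volume (Set.Ioc (1:ℝ) 2)).toReal) ≤
      ∫ x in Set.Ioc (1:ℝ) 2, Real.exp (-x) * x ^ (s - 1) := by
    rw [mul_comm, ← smul_eq_mul]
    apply MeasureTheory.setIntegral_ge_of_const_le measurableSet_Ioc
      (by simp [Real.volume_Ioc])
    · intro x hx
      have hx1 : (1:ℝ) ≤ x := hx.1.le
      have hx2 : x ≤ 2 := hx.2
      have h1 : Real.exp (-2) ≤ Real.exp (-x) := Real.exp_le_exp.2 (by linarith)
      have h2 : (1:ℝ) ≤ x ^ (s - 1) := by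
        calc (1:ℝ) = x ^ (0:ℝ) := (Real.rpow_zero x).symm
          _ ≤ x ^ (s - 1) := Real.rpow_le_rpow_of_exponent_le hx1 (by linarith)
      calc Real.exp (-2) = Real.exp (-2) * 1 := by ring
        _ ≤ Real.exp (-x) * x ^ (s - 1) :=
            mul_le_mul h1 h2 zero_le_one (Real.exp_nonneg _)
    · exact hint.mono_set hsub
  have hmeas : (volume (Set.Ioc (1:ℝ) 2)).toReal = 1 := by
    rw [Real.volume_Ioc]; norm_num
  rw [hmeas, mul_one] at key
  refine key.trans ?_
  apply MeasureTheory.setIntegral_mono_set hint ?_ (HasSubset.Subset.eventuallyLE hsub)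
  filter_upwards [ae_restrict_mem measurableSet_Ioi] with x hx
  have : (0:ℝ) < x := hx
  positivity

/-- `Γ(a) ≤ 1/a` for `a ∈ (0,1]`. -/
lemma aux_gamma_le {a : ℝ} (h0 : 0 < a) (h1 : a ≤ 1) : Real.Gamma a ≤ 1 / a := by
  have hG2 : Real.Gamma 2 = 1 := by
    rw [show (2:ℝ) = 1 + 1 by norm_num, Real.Gamma_add_one one_ne_zero, Real.Gamma_one]
    norm_num
  have hc := Real.convexOn_Gamma.2 (Set.mem_Ioi.mpr one_pos)
    (Set.mem_Ioi.mpr two_pos) (by linarith : (0:ℝ) ≤ 1 - a) h0.le (by ring)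
  have hcomb : (1 - a) • (1:ℝ) + a • (2:ℝ) = a + 1 := by
    simp [smul_eq_mul]; ring
  rw [hcomb, Real.Gamma_one, hG2, smul_eq_mul, smul_eq_mul] at hc
  have h2 : Real.Gamma (a + 1) ≤ 1 := by linarith [hc]
  have h3 : Real.Gamma (a + 1) = a * Real.Gamma a := Real.Gamma_add_one h0.ne'
  rw [le_div_iff₀ h0]
  calc Real.Gamma a * a = a * Real.Gamma a := by ring
    _ = Real.Gamma (a + 1) := h3.symm
    _ ≤ 1 := h2

/-- For fixed `b > 1` there is a constant `C > 0` (depending only on `b`)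
such that for every `a ∈ (0,1]`, every `E ≥ 1` and every `x ∈ [-E, E]`,
`g_{a,b}(x) ≥ C · a · E^(-(2b+1))`. -/
theorem nbp_marginal_uniform_lower_bound (b : ℝ) (hb : 1 < b) :
    ∃ C : ℝ, 0 < C ∧ ∀ a : ℝ, 0 < a → a ≤ 1 → ∀ E : ℝ, 1 ≤ E → ∀ x : ℝ, |x| ≤ E →
      ENNReal.ofReal (C * a * E ^ (-(2 * b + 1))) ≤ nbpMarginal a b x := by
  have hGb : 0 < Real.Gamma b := Real.Gamma_pos_of_pos (by linarith)
  have hpi : (0:ℝ) < π := Real.pi_pos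
  refine ⟨Real.exp (-2) / Real.Gamma b *
      ((4 * π) ^ (-(1/2:ℝ)) * Real.exp (-(1/2:ℝ)) * (4:ℝ) ^ (-(1 + b))), by positivity,
    ?_⟩
  intro a ha ha1 E hE x hx
  set C : ℝ := Real.exp (-2) / Real.Gamma b *
      ((4 * π) ^ (-(1/2:ℝ)) * Real.exp (-(1/2:ℝ)) * (4:ℝ) ^ (-(1 + b))) with hC
  have hE0 : (0:ℝ) < E := by linarith
  have hE20 : (0:ℝ) < E ^ 2 := by positivity
  set K : ℝ := C * a * E ^ (-(2 * b + 1)) * (E ^ 2)⁻¹ with hK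
  have hKpos : 0 < K := by positivity
  set s : Set ℝ := Set.Ioc (E ^ 2) (2 * E ^ 2) with hs
  have hsub : s ⊆ Set.Ioi (0:ℝ) := fun t ht => lt_trans hE20 ht.1
  -- pointwise bound
  have hpt : ∀ t ∈ s, K ≤
      (Real.Gamma (a + b) / (Real.Gamma a * Real.Gamma b)) *
      ((2 * π * t) ^ (-(1 / 2 : ℝ)) * Real.exp (-x ^ 2 / (2 * t)) *
        t ^ (a - 1) * (1 + t) ^ (-(a + b))) := by
    intro t ht
    have ht1 : E ^ 2 < t := ht.1
    have ht2 : t ≤ 2 * E ^ 2 := ht.2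
    have ht0 : (0:ℝ) < t := lt_trans hE20 ht1
    have ht1' : (1:ℝ) ≤ t := by nlinarith
    -- Gamma factor
    have hG : a * (Real.exp (-2) / Real.Gamma b) ≤
        Real.Gamma (a + b) / (Real.Gamma a * Real.Gamma b) := by
      have hga : Real.Gamma a ≤ 1 / a := aux_gamma_le ha ha1
      have hga0 : 0 < Real.Gamma a := Real.Gamma_pos_of_pos ha
      have hgab : Real.exp (-2) ≤ Real.Gamma (a + b) := aux_gamma_ge (by linarith)
      have h1 : Real.Gamma a * Real.Gamma b ≤ (1 / a) * Real.Gamma b :=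
        mul_le_mul_of_nonneg_right hga hGb.le
      have key : Real.exp (-2) / ((1 / a) * Real.Gamma b) ≤
          Real.Gamma (a + b) / (Real.Gamma a * Real.Gamma b) :=
        div_le_div₀ (le_trans (Real.exp_nonneg _) hgab) hgab (by positivity) h1
      calc a * (Real.exp (-2) / Real.Gamma b)
          = Real.exp (-2) / ((1 / a) * Real.Gamma b) := by
            field_simp
        _ ≤ _ := key
    -- first factor
    have hP1 : (4 * π) ^ (-(1/2:ℝ)) * E⁻¹ ≤ (2 * π * t) ^ (-(1 / 2 : ℝ)) := by
      have h1 : (2 * π * t) ≤ 4 * π * E ^ 2 := by nlinarith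
      have h2 : (4 * π * E ^ 2) ^ (-(1/2:ℝ)) ≤ (2 * π * t) ^ (-(1/2:ℝ)) :=
        Real.rpow_le_rpow_of_nonpos (by positivity) h1 (by norm_num)
      have heq : (4 * π * E ^ 2 : ℝ) ^ (-(1/2:ℝ)) = (4 * π) ^ (-(1/2:ℝ)) * E⁻¹ := by
        rw [Real.mul_rpow (by positivity) (by positivity)]
        congr 1
        rw [← Real.rpow_natCast E 2, ← Real.rpow_mul hE0.le, ← Real.rpow_neg_one E]
        norm_num
      exact le_trans (le_of_eq heq.symm) h2
    -- second factor
    have hP2 : Real.exp (-(1/2:ℝ)) ≤ Real.exp (-x ^ 2 / (2 * t)) := by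
      apply Real.exp_le_exp.2
      have hx2 : x ^ 2 ≤ E ^ 2 := by
        have := abs_le.mp hx
        nlinarith
      rw [neg_div, neg_le_neg_iff, div_le_iff₀ (by positivity)]
      nlinarith
    -- third and fourth factors combined
    have hP34 : (4:ℝ) ^ (-(1 + b)) * (E ^ 2 : ℝ) ^ (-(1 + b)) ≤
        t ^ (a - 1) * (1 + t) ^ (-(a + b)) := by
      have hb1 : (0:ℝ) < 1 + b := by linarith
      have h1t : 1 + t ≤ 2 * t := by linarith
      have step1 : (2 * t) ^ (-(a + b)) ≤ (1 + t) ^ (-(a + b)) :=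
        Real.rpow_le_rpow_of_nonpos (by positivity) h1t (by linarith)
      have step2 : (2:ℝ) ^ (-(1 + b)) ≤ (2:ℝ) ^ (-(a + b)) :=
        Real.rpow_le_rpow_of_exponent_le one_le_two (by linarith)
      have step3 : t ^ (-(1 + b)) ≤ t ^ (a - 1) * t ^ (-(a + b)) := by
        rw [← Real.rpow_add ht0]
        apply le_of_eq
        congr 1
        ring
      have step4 : (2 * E ^ 2 : ℝ) ^ (-(1 + b)) ≤ t ^ (-(1 + b)) :=
        Real.rpow_le_rpow_of_nonpos ht0 ht2 (by linarith)
      calc (4:ℝ) ^ (-(1 + b)) * (E ^ 2 : ℝ) ^ (-(1 + b))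
          = (2:ℝ) ^ (-(1 + b)) * (2 * E ^ 2 : ℝ) ^ (-(1 + b)) := by
            rw [Real.mul_rpow (by norm_num) (by positivity),
              show (4:ℝ) = 2 * 2 by norm_num,
              Real.mul_rpow (by norm_num) (by norm_num)]
            ring
        _ ≤ (2:ℝ) ^ (-(a + b)) * t ^ (-(1 + b)) :=
            mul_le_mul step2 step4 (by positivity) (by positivity)
        _ ≤ (2:ℝ) ^ (-(a + b)) * (t ^ (a - 1) * t ^ (-(a + b))) :=
            mul_le_mul_of_nonneg_left step3 (by positivity)
        _ = t ^ (a - 1) * ((2 * t) ^ (-(a + b))) := by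
            rw [Real.mul_rpow (by norm_num) ht0.le]; ring
        _ ≤ t ^ (a - 1) * (1 + t) ^ (-(a + b)) :=
            mul_le_mul_of_nonneg_left step1 (by positivity)
    -- assemble
    have hKeq : K = (a * (Real.exp (-2) / Real.Gamma b)) *
        ((4 * π) ^ (-(1/2:ℝ)) * E⁻¹ * Real.exp (-(1/2:ℝ)) *
          ((4:ℝ) ^ (-(1 + b)) * (E ^ 2 : ℝ) ^ (-(1 + b)))) := by
      have e1 : ((E ^ 2 : ℝ)) ^ (-(1 + b)) = E ^ (-(2 + 2 * b) : ℝ) := by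
        rw [← Real.rpow_natCast E 2, ← Real.rpow_mul hE0.le]
        congr 1; push_cast; ring
      have e2 : (E:ℝ)⁻¹ = E ^ (-1:ℝ) := (Real.rpow_neg_one E).symm
      have e3 : ((E ^ 2 : ℝ))⁻¹ = E ^ (-2:ℝ) := by
        rw [← Real.rpow_natCast E 2, ← Real.rpow_neg_one, ← Real.rpow_mul hE0.le]
        congr 1; push_cast; ring
      have e4 : E ^ (-(2 * b + 1)) * E ^ (-2:ℝ) =
          E ^ (-1:ℝ) * E ^ (-(2 + 2 * b) : ℝ) := by
        rw [← Real.rpow_add hE0, ← Real.rpow_add hE0]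
        congr 1; ring
      rw [hK, hC, e1, e2, e3]
      linear_combination (Real.exp (-2) / Real.Gamma b *
        ((4 * π) ^ (-(1/2:ℝ)) * Real.exp (-(1/2:ℝ)) * (4:ℝ) ^ (-(1 + b))) * a) * e4
    rw [hKeq]
    have hmid : (4 * π) ^ (-(1/2:ℝ)) * E⁻¹ * Real.exp (-(1/2:ℝ)) *
          ((4:ℝ) ^ (-(1 + b)) * (E ^ 2 : ℝ) ^ (-(1 + b))) ≤
        (2 * π * t) ^ (-(1 / 2 : ℝ)) * Real.exp (-x ^ 2 / (2 * t)) *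
          t ^ (a - 1) * (1 + t) ^ (-(a + b)) := by
      calc (4 * π) ^ (-(1/2:ℝ)) * E⁻¹ * Real.exp (-(1/2:ℝ)) *
            ((4:ℝ) ^ (-(1 + b)) * (E ^ 2 : ℝ) ^ (-(1 + b)))
          ≤ (2 * π * t) ^ (-(1 / 2 : ℝ)) * Real.exp (-x ^ 2 / (2 * t)) *
            (t ^ (a - 1) * (1 + t) ^ (-(a + b))) := by
            apply mul_le_mul (mul_le_mul hP1 hP2 (Real.exp_nonneg _) (by positivity))
              hP34 (by positivity) (by positivity)
        _ = _ := by ring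
    exact mul_le_mul hG hmid (by positivity) (by positivity)
  -- integrate
  have step1 : ∫⁻ t in s, ENNReal.ofReal
      ((Real.Gamma (a + b) / (Real.Gamma a * Real.Gamma b)) *
      ((2 * π * t) ^ (-(1 / 2 : ℝ)) * Real.exp (-x ^ 2 / (2 * t)) *
        t ^ (a - 1) * (1 + t) ^ (-(a + b)))) ≤ nbpMarginal a b x :=
    lintegral_mono_set hsub
  have step2 : ∫⁻ _ in s, ENNReal.ofReal K ≤ ∫⁻ t in s, ENNReal.ofReal
      ((Real.Gamma (a + b) / (Real.Gamma a * Real.Gamma b)) *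
      ((2 * π * t) ^ (-(1 / 2 : ℝ)) * Real.exp (-x ^ 2 / (2 * t)) *
        t ^ (a - 1) * (1 + t) ^ (-(a + b)))) :=
    setLIntegral_mono' measurableSet_Ioc fun t ht =>
      ENNReal.ofReal_le_ofReal (hpt t ht)
  refine le_trans ?_ (le_trans step2 step1)
  rw [setLIntegral_const, hs, Real.volume_Ioc,
    show 2 * E ^ 2 - E ^ 2 = E ^ 2 by ring,
    ← ENNReal.ofReal_mul hKpos.le]
  apply ENNReal.ofReal_le_ofReal
  rw [hK]
  field_simp
  exact le_rfl
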